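/- For a complex number δ that is not a root of unity and any integer k ≥ 0, the sum Σ_{j=0}^{k} 1/((1+δ^{−j})(1+δ^{j+1})) equals (1 + δ + ⋯ + δ^k) / (2(1+δ^{k+1})). -/

import Mathlib

/-- For δ ∈ ℂ not a root of unity, nonzero, with δ^j ≠ −1 for all integers j,
and any k ≥ 0: Σ_{j=0}^{k} 1/((1+δ^{−j})(1+δ^{j+1})) = (1+δ+⋯+δ^k)/(2(1+δ^{k+1})). -/
theorem stmt7 (δ : ℂ) (hδ0 : δ ≠ 0)
    (hδ : ∀ n : ℕ, 0 < n → δ ^ n ≠ 1)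
    (hδ' : ∀ j : ℤ, δ ^ j ≠ -1) (k : ℕ) :
    ∑ j ∈ Finset.range (k + 1),
        1 / ((1 + δ ^ (-(j : ℤ))) * (1 + δ ^ (j + 1))) =
      (∑ i ∈ Finset.range (k + 1), δ ^ i) / (2 * (1 + δ ^ (k + 1))) := by
  have hne : ∀ n : ℕ, (1 : ℂ) + δ ^ n ≠ 0 := by
    intro n h
    exact hδ' (n : ℤ) (by rw [zpow_natCast]; linear_combination h)
  have hterm : ∀ j : ℕ, 1 / ((1 + δ ^ (-(j : ℤ))) * (1 + δ ^ (j + 1)))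
      = δ ^ j / ((1 + δ ^ j) * (1 + δ ^ (j + 1))) := by
    intro j
    rw [zpow_neg, zpow_natCast]
    have hpj : δ ^ j ≠ 0 := pow_ne_zero _ hδ0
    have e : 1 + (δ ^ j)⁻¹ = (1 + δ ^ j) / δ ^ j := by
      rw [add_div, div_self hpj, one_div]; exact add_comm _ _
    rw [e, div_mul_eq_mul_div, one_div_div]
  simp only [hterm]
  induction k with
  | zero =>
    rw [Finset.sum_range_one, Finset.sum_range_one]
    norm_num
  | succ n ih =>
    rw [Finset.sum_range_succ _ (n + 1), ih,
      Finset.sum_range_succ (fun i => δ ^ i) (n + 1)]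
    have hg := geom_sum_mul δ (n + 1)
    have h1 := hne (n + 1)
    have h2 := hne (n + 2)
    rw [show n + 1 + 1 = (n + 1) + 1 from rfl, pow_succ δ (n + 1)] at h2 ⊢
    set S := ∑ i ∈ Finset.range (n + 1), δ ^ i with hS
    set a := δ ^ (n + 1) with ha
    field_simp
    linear_combination a * hg
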